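/- arXiv:2305.07213 — 3 statements merged into one kernel-verified Lean document; each statement's English description precedes it below -/
import Mathlib

section
/- (Theorem 1 / Theorem 2, single view.) Let x_1, ..., x_N ∈ ℝ^d, let A_1, ..., A_C be a partition of {1,...,N} into nonempty clusters with indicator matrix Y ∈ {0,1}^{N×C}, let D ∈ ℝ^{N×N} be the distance matrix D_{il} = ‖x_i − x_l‖², and let G = Y (Yᵀ Y)^{−1/2}. Then the infimum over all centroid matrices M ∈ ℝ^{d×C} of ‖X − M Yᵀ‖_F², where X ∈ ℝ^{N×d} has rows x_iᵀ, equals (1/2) tr(Gᵀ D G); moreover this infimum is attained by the matrix M whose j-th column is the mean of the points in cluster A_j. -/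
lemma sum_sq_sub_const {ι : Type*} (S : Finset ι) (y : ι → ℝ) (m : ℝ) :
    ∑ i ∈ S, (y i - m)^2
      = (∑ i ∈ S, (y i)^2) - 2*m*(∑ i ∈ S, y i) + S.card * m^2 := by
  have h : ∀ i ∈ S, (y i - m)^2 = (y i)^2 - 2*m*(y i) + m^2 := by intros; ring
  rw [Finset.sum_congr rfl h, Finset.sum_add_distrib, Finset.sum_sub_distrib,
      ← Finset.mul_sum, Finset.sum_const, nsmul_eq_mul]

lemma sum_sum_sq_diff {ι : Type*} (S : Finset ι) (y : ι → ℝ) :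
    ∑ i ∈ S, ∑ l ∈ S, (y i - y l)^2
      = 2 * S.card * (∑ i ∈ S, (y i)^2) - 2 * (∑ i ∈ S, y i)^2 := by
  have h : ∀ i ∈ S, ∑ l ∈ S, (y i - y l)^2
      = (∑ l ∈ S, (y l)^2) - 2*(y i)*(∑ l ∈ S, y l) + S.card * (y i)^2 := by
    intro i _
    have h2 : ∀ l ∈ S, (y i - y l)^2 = (y l - y i)^2 := by intros; ring
    rw [Finset.sum_congr rfl h2, sum_sq_sub_const]
  rw [Finset.sum_congr rfl h, Finset.sum_add_distrib, Finset.sum_sub_distrib,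
      Finset.sum_const, nsmul_eq_mul, ← Finset.mul_sum]
  have h3 : ∑ i ∈ S, 2*(y i)*(∑ l ∈ S, y l) = 2*(∑ i ∈ S, y i)*(∑ l ∈ S, y l) := by
    rw [← Finset.sum_mul, ← Finset.mul_sum]
  rw [h3]; ring

lemma scalar_key {ι : Type*} (S : Finset ι) (hS : 0 < (S.card:ℝ)) (y : ι → ℝ) (m : ℝ) :
    (2 * (S.card:ℝ))⁻¹ * ∑ i ∈ S, ∑ l ∈ S, (y i - y l)^2 ≤ ∑ i ∈ S, (y i - m)^2 := by
  rw [sum_sum_sq_diff, sum_sq_sub_const, inv_mul_le_iff₀ (by positivity)]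
  nlinarith [sq_nonneg ((S.card:ℝ)*m - ∑ i ∈ S, y i)]

lemma scalar_eq {ι : Type*} (S : Finset ι) (hS : 0 < (S.card:ℝ)) (y : ι → ℝ) :
    ∑ i ∈ S, (y i - (∑ l ∈ S, y l)/(S.card:ℝ))^2
      = (2 * (S.card:ℝ))⁻¹ * ∑ i ∈ S, ∑ l ∈ S, (y i - y l)^2 := by
  rw [sum_sum_sq_diff, sum_sq_sub_const]
  field_simp
  ring

/-- Theorems 1/2, single view: for data points `x_1, …, x_N ∈ ℝ^d`
partitioned into nonempty clusters with indicator matrix `Y`, distance matrix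
`D_{il} = ‖x_i − x_l‖²` and `G = Y (YᵀY)^{-1/2}`, the minimum over centroid
matrices `M ∈ ℝ^{d×C}` of the k-means objective `‖Xᵀ − M Yᵀ‖_F²` equals
`(1/2) tr(Gᵀ D G)`, attained when the `j`-th column of `M` is the mean of
cluster `A_j`. -/
theorem kmeans_single_view_eq_trace (d N C : ℕ)
    (x : Fin N → EuclideanSpace ℝ (Fin d))
    (a : Fin N → Fin C) (ha : Function.Surjective a)
    (Y : Matrix (Fin N) (Fin C) ℝ)
    (hY : Y = Matrix.of fun i j => if a i = j then (1 : ℝ) else 0)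
    (X : Matrix (Fin N) (Fin d) ℝ) (hX : X = Matrix.of fun i k => x i k)
    (D : Matrix (Fin N) (Fin N) ℝ)
    (hD : D = Matrix.of fun i l => ‖x i - x l‖ ^ 2)
    (Nsize : Fin C → ℕ)
    (hsize : ∀ j, Nsize j = (Finset.univ.filter fun i => a i = j).card)
    (G : Matrix (Fin N) (Fin C) ℝ)
    (hG : G = Y * Matrix.diagonal (fun j => (Nsize j : ℝ) ^ (-(1 / 2 : ℝ))))
    (M₀ : Matrix (Fin d) (Fin C) ℝ)
    (hM₀ : M₀ = Matrix.of fun k j =>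
      (∑ i ∈ Finset.univ.filter fun i => a i = j, x i k) / (Nsize j : ℝ)) :
    (∀ M : Matrix (Fin d) (Fin C) ℝ,
        (1 / 2) * Matrix.trace (G.transpose * D * G) ≤
          ∑ k, ∑ i, (X.transpose k i - (M * Y.transpose) k i) ^ 2) ∧
    ∑ k, ∑ i, (X.transpose k i - (M₀ * Y.transpose) k i) ^ 2 =
      (1 / 2) * Matrix.trace (G.transpose * D * G) := by
  set S : Fin C → Finset (Fin N) := fun j => Finset.univ.filter (fun i => a i = j) with hSdef
  have hcard : ∀ j, 0 < ((S j).card : ℝ) := by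
    intro j
    obtain ⟨i, hi⟩ := ha j
    have : (S j).Nonempty := ⟨i, by simp [hSdef, hi]⟩
    exact_mod_cast Finset.card_pos.2 this
  have hNs : ∀ j, (Nsize j : ℝ) = ((S j).card : ℝ) := by
    intro j; rw [hsize j]
  -- objective rewriting
  have hobj : ∀ M : Matrix (Fin d) (Fin C) ℝ,
      ∑ k, ∑ i, (X.transpose k i - (M * Y.transpose) k i) ^ 2
        = ∑ j, ∑ k, ∑ i ∈ S j, (x i k - M k j)^2 := by
    intro M
    have hMY : ∀ k i, (M * Y.transpose) k i = M k (a i) := by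
      intro k i
      simp [hY, Matrix.mul_apply, mul_ite]
    have h1 : ∀ k, ∑ i, (X.transpose k i - (M * Y.transpose) k i) ^ 2
        = ∑ j, ∑ i ∈ S j, (x i k - M k j)^2 := by
      intro k
      rw [← Finset.sum_fiberwise Finset.univ a (fun i => (X.transpose k i - (M * Y.transpose) k i) ^ 2)]
      refine Finset.sum_congr rfl fun j _ => Finset.sum_congr rfl fun i hi => ?_
      have hij : a i = j := by simpa [hSdef] using hi
      rw [hMY, hX, hij]
      simp
    rw [Finset.sum_congr rfl fun k _ => h1 k, Finset.sum_comm]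
  -- trace rewriting
  have hGapp : ∀ i j, G i j = if a i = j then ((Nsize j : ℝ) ^ (-(1/2):ℝ)) else 0 := by
    intro i j
    rw [hG, Matrix.mul_diagonal, hY]
    simp [ite_mul]
  have hDapp : ∀ i l, D i l = ∑ k, (x i k - x l k)^2 := by
    intro i l
    rw [hD]
    simp only [Matrix.of_apply]
    rw [EuclideanSpace.norm_eq, Real.sq_sqrt (by positivity)]
    refine Finset.sum_congr rfl fun k _ => ?_
    simp [Real.norm_eq_abs, sq_abs]
  have hw2 : ∀ j, ((Nsize j:ℝ) ^ (-(1/2):ℝ))^2 = ((S j).card:ℝ)⁻¹ := by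
    intro j
    rw [← Real.rpow_natCast ((Nsize j:ℝ) ^ (-(1/2):ℝ)) 2, ← Real.rpow_mul (by positivity)]
    norm_num [hNs j, Real.rpow_neg_one]
  have htr : (1/2 : ℝ) * Matrix.trace (G.transpose * D * G)
      = ∑ j, ∑ k, (2*((S j).card:ℝ))⁻¹ * ∑ i ∈ S j, ∑ l ∈ S j, (x i k - x l k)^2 := by
    have htrace : Matrix.trace (G.transpose * D * G)
        = ∑ j, ∑ i, ∑ l, G i j * D i l * G l j := by
      simp only [Matrix.trace, Matrix.diag, Matrix.mul_apply, Matrix.transpose_apply,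
        Finset.sum_mul]
      rw [Finset.sum_congr rfl fun j _ => Finset.sum_comm]
    rw [htrace, Finset.mul_sum]
    refine Finset.sum_congr rfl fun j _ => ?_
    have hjj : ∑ i, ∑ l, G i j * D i l * G l j
        = ((S j).card:ℝ)⁻¹ * ∑ i ∈ S j, ∑ l ∈ S j, D i l := by
      rw [Finset.mul_sum]
      rw [show (∑ i ∈ S j, ((S j).card:ℝ)⁻¹ * ∑ l ∈ S j, D i l)
            = ∑ i, if a i = j then (((S j).card:ℝ)⁻¹ * ∑ l ∈ S j, D i l) else 0 by
          rw [← Finset.sum_filter]]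
      refine Finset.sum_congr rfl fun i _ => ?_
      rw [show (∑ l ∈ S j, D i l) = ∑ l, if a l = j then D i l else 0 by rw [← Finset.sum_filter]]
      rw [Finset.mul_sum]
      by_cases hij : a i = j
      · simp only [hij, if_true]
        refine Finset.sum_congr rfl fun l _ => ?_
        rw [hGapp, hGapp, hij, if_pos rfl]
        by_cases hlj : a l = j
        · rw [if_pos hlj, if_pos hlj,
            show ((Nsize j:ℝ) ^ (-(1/2):ℝ)) * D i l * ((Nsize j:ℝ) ^ (-(1/2):ℝ))
              = ((Nsize j:ℝ) ^ (-(1/2):ℝ))^2 * D i l from by ring, hw2]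
        · rw [if_neg hlj, if_neg hlj, mul_zero, mul_zero]
      · simp only [hij, if_false]
        refine Finset.sum_eq_zero fun l _ => by rw [hGapp, if_neg hij]; ring
    rw [hjj]
    -- now D → coordinate sums and swap k with (i,l)
    have : ∑ i ∈ S j, ∑ l ∈ S j, D i l
        = ∑ k, ∑ i ∈ S j, ∑ l ∈ S j, (x i k - x l k)^2 := by
      rw [Finset.sum_congr rfl fun i _ => Finset.sum_congr rfl fun l _ => hDapp i l]
      exact (Finset.sum_congr rfl fun i _ => Finset.sum_comm).trans Finset.sum_comm
    rw [this, Finset.mul_sum, Finset.mul_sum]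
    refine Finset.sum_congr rfl fun k _ => ?_
    rw [mul_inv, mul_assoc, one_div]
  constructor
  · intro M
    rw [hobj, htr]
    refine Finset.sum_le_sum fun j _ => Finset.sum_le_sum fun k _ => ?_
    exact scalar_key (S j) (hcard j) (fun i => x i k) (M k j)
  · rw [hobj, htr]
    refine Finset.sum_congr rfl fun j _ => Finset.sum_congr rfl fun k _ => ?_
    rw [hM₀]
    simp only [Matrix.of_apply]
    rw [show ((∑ i ∈ Finset.univ.filter fun i => a i = j, x i k) / (Nsize j : ℝ))
        = (∑ l ∈ S j, x l k) / ((S j).card : ℝ) by rw [hNs j]]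
    exact scalar_eq (S j) (hcard j) (fun i => x i k)
end

section
/- (Theorem 2, multi-view.) For v = 1, ..., V, let x_1^{(v)}, ..., x_N^{(v)} ∈ ℝ^{d_v} with data matrix X^{(v)} ∈ ℝ^{N×d_v} whose rows are (x_i^{(v)})ᵀ, and let D^{(v)} ∈ ℝ^{N×N} be given by D^{(v)}_{il} = ‖x_i^{(v)} − x_l^{(v)}‖². Let A_1, ..., A_C be a partition of {1,...,N} into nonempty clusters with indicator matrix Y and G = Y (Yᵀ Y)^{−1/2}. Then the infimum over all families of centroid matrices M^{(v)} ∈ ℝ^{d_v×C} of Σ_{v=1}^V ‖X^{(v)} − M^{(v)} Yᵀ‖_F² equals (1/2) Σ_{v=1}^V tr(Gᵀ D^{(v)} G), attained when each M^{(v)} has j-th column equal to the mean over A_j of the x_i^{(v)}. -/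
lemma expand_sum {ι : Type*} (s : Finset ι) (y : ι → ℝ) (c : ℝ) :
    ∑ i ∈ s, (y i - c)^2
      = (∑ i ∈ s, (y i)^2) - 2*c*(∑ i ∈ s, y i) + (s.card : ℝ) * c^2 := by
  have h : ∀ i ∈ s, (y i - c)^2 = (y i)^2 - (2*c)*(y i) + c^2 := fun i _ => by ring
  rw [Finset.sum_congr rfl h, Finset.sum_add_distrib, Finset.sum_sub_distrib,
    ← Finset.mul_sum, Finset.sum_const, nsmul_eq_mul]

lemma var_min {ι : Type*} (s : Finset ι) (hs : s.Nonempty) (y : ι → ℝ) (c : ℝ) :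
    ∑ i ∈ s, (y i - (∑ l ∈ s, y l)/(s.card:ℝ))^2 ≤ ∑ i ∈ s, (y i - c)^2 := by
  have hn : (0:ℝ) < (s.card:ℝ) := by exact_mod_cast Finset.card_pos.mpr hs
  have key : (∑ i ∈ s, (y i - c)^2) - (∑ i ∈ s, (y i - (∑ l ∈ s, y l)/(s.card:ℝ))^2)
      = (s.card:ℝ) * (c - (∑ l ∈ s, y l)/(s.card:ℝ))^2 := by
    rw [expand_sum, expand_sum]
    field_simp
    ring
  nlinarith [mul_nonneg hn.le (sq_nonneg (c - (∑ l ∈ s, y l)/(s.card:ℝ)))]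

lemma pair_sum {ι : Type*} (s : Finset ι) (hs : s.Nonempty) (y : ι → ℝ) :
    ∑ i ∈ s, ∑ l ∈ s, (y i - y l)^2
      = 2 * (s.card:ℝ) * ∑ i ∈ s, (y i - (∑ l ∈ s, y l)/(s.card:ℝ))^2 := by
  have hn : (0:ℝ) < (s.card:ℝ) := by exact_mod_cast Finset.card_pos.mpr hs
  have h1 : ∀ i ∈ s, ∑ l ∈ s, (y i - y l)^2
      = (∑ l ∈ s, (y l)^2) - (2*(y i))*(∑ l ∈ s, y l) + (s.card:ℝ)*(y i)^2 := by
    intro i _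
    have h2 : ∑ l ∈ s, (y i - y l)^2 = ∑ l ∈ s, (y l - y i)^2 :=
      Finset.sum_congr rfl fun l _ => by ring
    rw [h2, expand_sum]
  rw [Finset.sum_congr rfl h1, expand_sum]
  rw [Finset.sum_add_distrib, Finset.sum_sub_distrib, Finset.sum_const, nsmul_eq_mul]
  have h3 : ∑ i ∈ s, (2*(y i))*(∑ l ∈ s, y l) = 2*(∑ l ∈ s, y l)*(∑ i ∈ s, y i) := by
    rw [Finset.mul_sum]
    exact Finset.sum_congr rfl fun i _ => by ring
  have h4 : ∑ i ∈ s, (s.card:ℝ)*(y i)^2 = (s.card:ℝ)*∑ i ∈ s, (y i)^2 := by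
    rw [Finset.mul_sum]
  rw [h3, h4]
  field_simp
  ring


/-- Theorem 2, multi-view: for multi-view data
`x^{(v)}_1, …, x^{(v)}_N ∈ ℝ^{d_v}` (`v = 1, …, V`) partitioned into nonempty
clusters with indicator matrix `Y`, distance matrices
`D^{(v)}_{il} = ‖x^{(v)}_i − x^{(v)}_l‖²` and `G = Y (YᵀY)^{-1/2}`, the minimum
over families of centroid matrices `M^{(v)} ∈ ℝ^{d_v×C}` of
`∑ v, ‖X^{(v)ᵀ} − M^{(v)} Yᵀ‖_F²` equals `(1/2) ∑ v, tr(Gᵀ D^{(v)} G)`,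
attained when the `j`-th column of `M^{(v)}` is the mean of cluster `A_j`
in view `v`. -/
theorem kmeans_multi_view_eq_trace (V N C : ℕ) (d : Fin V → ℕ)
    (x : (v : Fin V) → Fin N → EuclideanSpace ℝ (Fin (d v)))
    (a : Fin N → Fin C) (ha : Function.Surjective a)
    (Y : Matrix (Fin N) (Fin C) ℝ)
    (hY : Y = Matrix.of fun i j => if a i = j then (1 : ℝ) else 0)
    (X : (v : Fin V) → Matrix (Fin N) (Fin (d v)) ℝ)
    (hX : ∀ v, X v = Matrix.of fun i k => x v i k)
    (D : Fin V → Matrix (Fin N) (Fin N) ℝ)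
    (hD : ∀ v, D v = Matrix.of fun i l => ‖x v i - x v l‖ ^ 2)
    (Nsize : Fin C → ℕ)
    (hsize : ∀ j, Nsize j = (Finset.univ.filter fun i => a i = j).card)
    (G : Matrix (Fin N) (Fin C) ℝ)
    (hG : G = Y * Matrix.diagonal (fun j => (Nsize j : ℝ) ^ (-(1 / 2 : ℝ))))
    (M₀ : (v : Fin V) → Matrix (Fin (d v)) (Fin C) ℝ)
    (hM₀ : ∀ v, M₀ v = Matrix.of fun k j =>
      (∑ i ∈ Finset.univ.filter fun i => a i = j, x v i k) / (Nsize j : ℝ)) :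
    (∀ M : (v : Fin V) → Matrix (Fin (d v)) (Fin C) ℝ,
        (1 / 2) * ∑ v, Matrix.trace (G.transpose * D v * G) ≤
          ∑ v, ∑ k, ∑ i, ((X v).transpose k i - (M v * Y.transpose) k i) ^ 2) ∧
    ∑ v, ∑ k, ∑ i, ((X v).transpose k i - (M₀ v * Y.transpose) k i) ^ 2 =
      (1 / 2) * ∑ v, Matrix.trace (G.transpose * D v * G) := by
  classical
  set fib : Fin C → Finset (Fin N) := fun j => Finset.univ.filter fun i => a i = j with hfib
  have hne : ∀ j, (fib j).Nonempty := by
    intro j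
    obtain ⟨i, hi⟩ := ha j
    exact ⟨i, by simp [hfib, hi]⟩
  have hcardpos : ∀ j, (0:ℝ) < ((fib j).card : ℝ) := fun j => by
    exact_mod_cast Finset.card_pos.mpr (hne j)
  have hNsize : ∀ j, (Nsize j : ℝ) = ((fib j).card : ℝ) := fun j => by
    rw [hsize]
  -- norm as coordinate sum
  have hnorm : ∀ (v : Fin V) (i l : Fin N),
      ‖x v i - x v l‖^2 = ∑ k, (x v i k - x v l k)^2 := by
    intro v i l
    rw [EuclideanSpace.norm_eq, Real.sq_sqrt (by positivity)]
    refine Finset.sum_congr rfl fun k _ => ?_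
    simp [Real.norm_eq_abs, sq_abs]
  -- objective rewrite
  have hMY : ∀ (v : Fin V) (M : Matrix (Fin (d v)) (Fin C) ℝ) (k : Fin (d v)) (i : Fin N),
      (M * Y.transpose) k i = M k (a i) := by
    intro v M k i
    simp [Matrix.mul_apply, hY, mul_ite]
  have hobj : ∀ (v : Fin V) (M : Matrix (Fin (d v)) (Fin C) ℝ),
      (∑ k, ∑ i, ((X v).transpose k i - (M * Y.transpose) k i)^2)
        = ∑ k, ∑ j, ∑ i ∈ fib j, (x v i k - M k j)^2 := by
    intro v M
    refine Finset.sum_congr rfl fun k _ => ?_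
    have h1 : ∀ j ∈ (Finset.univ : Finset (Fin C)),
        ∑ i ∈ fib j, (x v i k - M k j)^2
          = ∑ i ∈ fib j, (x v i k - M k (a i))^2 := by
      intro j _
      refine Finset.sum_congr rfl fun i hi => ?_
      rw [(Finset.mem_filter.mp hi).2]
    rw [Finset.sum_congr rfl h1, hfib,
      Finset.sum_fiberwise_of_maps_to (fun i _ => Finset.mem_univ (a i))]
    refine Finset.sum_congr rfl fun i _ => ?_
    rw [hMY v M k i, hX]
    rfl
  -- G entries
  have hGe : ∀ i j, G i j = (if a i = j then ((fib j).card:ℝ)^(-(1/2):ℝ) else 0) := by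
    intro i j
    rw [hG, Matrix.mul_diagonal, hY]
    simp only [Matrix.of_apply]
    rw [hNsize j]
    split_ifs <;> simp
  have hcc : ∀ j, ((fib j).card:ℝ)^(-(1/2):ℝ) * ((fib j).card:ℝ)^(-(1/2):ℝ)
      = ((fib j).card:ℝ)⁻¹ := by
    intro j
    rw [← Real.rpow_add (hcardpos j), show (-(1/2:ℝ)) + -(1/2) = -1 by norm_num,
      Real.rpow_neg_one]
  -- trace rewrite
  have htr : ∀ v, Matrix.trace (G.transpose * D v * G)
      = ∑ j, ((fib j).card:ℝ)⁻¹ * ∑ i ∈ fib j, ∑ l ∈ fib j, ∑ k, (x v i k - x v l k)^2 := by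
    intro v
    rw [Matrix.trace]
    refine Finset.sum_congr rfl fun j _ => ?_
    simp only [Matrix.diag_apply, Matrix.mul_apply, Matrix.transpose_apply]
    have step1 : ∑ l, (∑ i, G i j * D v i l) * G l j
        = ∑ i, ∑ l, G i j * D v i l * G l j := by
      rw [Finset.sum_comm]
      exact Finset.sum_congr rfl fun l _ => by rw [Finset.sum_mul]
    rw [step1]
    have step2 : ∀ i l : Fin N, G i j * D v i l * G l j
        = (if a i = j then (if a l = j then
            ((fib j).card:ℝ)⁻¹ * ∑ k, (x v i k - x v l k)^2 else 0) else 0) := by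
      intro i l
      rw [hGe, hGe, hD]
      split_ifs with h1 h2
      · simp only [Matrix.of_apply]
        rw [hnorm]
        rw [show ((fib j).card:ℝ)^(-(1/2):ℝ) * (∑ k, (x v i k - x v l k)^2) * ((fib j).card:ℝ)^(-(1/2):ℝ)
            = (((fib j).card:ℝ)^(-(1/2):ℝ) * ((fib j).card:ℝ)^(-(1/2):ℝ)) * ∑ k, (x v i k - x v l k)^2 from by ring,
          hcc]
      all_goals simp
    rw [Finset.sum_congr rfl (fun i _ => Finset.sum_congr rfl fun l _ => step2 i l)]
    have step3 : ∀ i : Fin N,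
        (∑ l, (if a i = j then (if a l = j then
            ((fib j).card:ℝ)⁻¹ * ∑ k, (x v i k - x v l k)^2 else 0) else 0))
        = (if a i = j then ∑ l ∈ fib j, ((fib j).card:ℝ)⁻¹ * ∑ k, (x v i k - x v l k)^2 else 0) := by
      intro i
      by_cases h : a i = j
      · simp only [h, if_true]
        rw [Finset.sum_filter]
      · simp [h]
    rw [Finset.sum_congr rfl (fun i _ => step3 i), ← Finset.sum_filter]
    have hfj : Finset.filter (fun i => a i = j) Finset.univ = fib j := rfl
    rw [hfj, Finset.mul_sum]
    exact Finset.sum_congr rfl fun i _ => (Finset.mul_sum _ _ _).symm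
  -- mean
  set μ : (v : Fin V) → Fin (d v) → Fin C → ℝ :=
    fun v k j => (∑ i ∈ fib j, x v i k)/((fib j).card:ℝ) with hμ
  have hM0 : ∀ (v : Fin V) (k : Fin (d v)) (j : Fin C), M₀ v k j = μ v k j := by
    intro v k j
    rw [hM₀, hμ]
    simp only [Matrix.of_apply]
    rw [hNsize j]
  have hhalf : ∀ v, (1/2:ℝ) * Matrix.trace (G.transpose * D v * G)
      = ∑ k, ∑ j, ∑ i ∈ fib j, (x v i k - μ v k j)^2 := by
    intro v
    rw [htr v, Finset.mul_sum, Finset.sum_comm]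
    refine Finset.sum_congr rfl fun j _ => ?_
    have hswap : ∑ i ∈ fib j, ∑ l ∈ fib j, ∑ k, (x v i k - x v l k)^2
        = ∑ k, ∑ i ∈ fib j, ∑ l ∈ fib j, (x v i k - x v l k)^2 := by
      rw [Finset.sum_congr rfl fun i (_ : i ∈ fib j) => (Finset.sum_comm :
        (∑ l ∈ fib j, ∑ k, (x v i k - x v l k)^2) = ∑ k, ∑ l ∈ fib j, (x v i k - x v l k)^2)]
      exact Finset.sum_comm
    rw [hswap, Finset.mul_sum, Finset.mul_sum]
    refine Finset.sum_congr rfl fun k _ => ?_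
    rw [pair_sum (fib j) (hne j) (fun i => x v i k)]
    simp only [hμ]
    have hc : ((fib j).card:ℝ) ≠ 0 := (hcardpos j).ne'
    field_simp
  constructor
  · intro M
    rw [Finset.mul_sum]
    refine Finset.sum_le_sum fun v _ => ?_
    rw [hhalf v, hobj v (M v)]
    refine Finset.sum_le_sum fun k _ => Finset.sum_le_sum fun j _ => ?_
    exact var_min (fib j) (hne j) (fun i => x v i k) (M v k j)
  · rw [Finset.mul_sum]
    refine Finset.sum_congr rfl fun v _ => ?_
    rw [hobj v (M₀ v), hhalf v]
    exact Finset.sum_congr rfl fun k _ => Finset.sum_congr rfl fun j _ =>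
      Finset.sum_congr rfl fun i _ => by rw [hM0]
end

section
/- (Optimality of the view weights, Eq. (31).) Let r > 1 be a real number and let M_1, ..., M_V be strictly positive real numbers. Define α_v = M_v^{1/(1−r)} / Σ_{w=1}^V M_w^{1/(1−r)}. Then α_1, ..., α_V are nonnegative, Σ_{v=1}^V α_v = 1, and for every β_1, ..., β_V with β_v ≥ 0 and Σ_{v=1}^V β_v = 1 one has Σ_{v=1}^V α_v^r M_v ≤ Σ_{v=1}^V β_v^r M_v. -/
/-- optimality of the view weights, Eq. (31): for `r > 1` and
positive `M_1, …, M_V`, the weights `α_v = M_v^{1/(1−r)} / ∑_w M_w^{1/(1−r)}`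
are nonnegative, sum to `1`, and minimize `∑_v β_v^r M_v` over the probability
simplex. -/
theorem view_weights_optimal (V : ℕ) (hV : 0 < V) (r : ℝ) (hr : 1 < r)
    (M : Fin V → ℝ) (hM : ∀ v, 0 < M v)
    (α : Fin V → ℝ)
    (hα : ∀ v, α v = M v ^ (1 / (1 - r)) / ∑ w, M w ^ (1 / (1 - r))) :
    (∀ v, 0 ≤ α v) ∧ (∑ v, α v = 1) ∧
    ∀ β : Fin V → ℝ, (∀ v, 0 ≤ β v) → (∑ v, β v = 1) →
      ∑ v, α v ^ r * M v ≤ ∑ v, β v ^ r * M v := by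
  set S : ℝ := ∑ w, M w ^ (1 / (1 - r)) with hS
  have hSpos : 0 < S := by
    apply Finset.sum_pos
    · intro i _
      exact Real.rpow_pos_of_pos (hM i) _
    · exact Finset.univ_nonempty_iff.mpr (Fin.pos_iff_nonempty.mp hV)
  have hαpos : ∀ v, 0 < α v := fun v => by
    rw [hα v]
    exact div_pos (Real.rpow_pos_of_pos (hM v) _) hSpos
  have hsum : ∑ v, α v = 1 := by
    rw [Finset.sum_congr rfl fun v _ => hα v, ← Finset.sum_div, ← hS,
      div_self hSpos.ne']
  refine ⟨fun v => (hαpos v).le, hsum, ?_⟩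
  -- key identity: α v ^ (r - 1) * M v = S ^ (1 - r)
  have hkey : ∀ v, α v ^ (r - 1) * M v = S ^ (1 - r) := by
    intro v
    rw [hα v, Real.div_rpow (Real.rpow_pos_of_pos (hM v) _).le hSpos.le,
      ← Real.rpow_mul (hM v).le]
    have h1 : 1 / (1 - r) * (r - 1) = -1 := by
      have : (1:ℝ) - r ≠ 0 := by linarith
      field_simp
      ring
    rw [h1, Real.rpow_neg_one]
    rw [div_mul_eq_mul_div, inv_mul_cancel₀ (hM v).ne', one_div,
      ← Real.rpow_neg hSpos.le]
    congr 1
    ring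
  intro β hβ hβsum
  -- tangent plane inequality at α v
  have htang : ∀ v, α v ^ r * M v + r * (S ^ (1 - r)) * (β v - α v) ≤
      β v ^ r * M v := by
    intro v
    have hav := hαpos v
    have hs : (-1 : ℝ) ≤ β v / α v - 1 := by
      have : 0 ≤ β v / α v := div_nonneg (hβ v) hav.le
      linarith
    have hb := one_add_mul_self_le_rpow_one_add hs hr.le
    rw [add_sub_cancel] at hb
    have hb2 : (1 + r * (β v / α v - 1)) * (α v ^ r * M v) ≤
        (β v / α v) ^ r * (α v ^ r * M v) := by
      exact mul_le_mul_of_nonneg_right hb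
        (mul_nonneg (Real.rpow_nonneg hav.le r) (hM v).le)
    calc α v ^ r * M v + r * (S ^ (1 - r)) * (β v - α v)
        = (1 + r * (β v / α v - 1)) * (α v ^ r * M v) := by
          rw [← hkey v]
          have har : α v ^ r = α v ^ (r - 1) * α v := by
            rw [← Real.rpow_add_one hav.ne' (r - 1), sub_add_cancel]
          rw [har]
          field_simp
      _ ≤ (β v / α v) ^ r * (α v ^ r * M v) := hb2
      _ = β v ^ r * M v := by
          rw [Real.div_rpow (hβ v) hav.le]
          field_simp
  calc ∑ v, α v ^ r * M v
      = ∑ v, (α v ^ r * M v + r * (S ^ (1 - r)) * (β v - α v)) := by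
        rw [Finset.sum_add_distrib, ← Finset.mul_sum, Finset.sum_sub_distrib,
          hβsum, hsum, sub_self, mul_zero, add_zero]
    _ ≤ ∑ v, β v ^ r * M v := Finset.sum_le_sum fun v _ => htang v
end
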